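/- arXiv:2407.05162 — 6 statements merged into one kernel-verified Lean document; each statement's English description precedes it below -/
import Mathlib

section
/- The unique real solution α of 4/2^α + 22/4^α = 1 satisfies 2.82 < α < 2.83. -/
open Real

lemma sqrt26_lb : (7.099:ℝ) < 2 + Real.sqrt 26 := by
  have h : Real.sqrt ((5.099:ℝ)^2) < Real.sqrt 26 :=
    Real.sqrt_lt_sqrt (by positivity) (by norm_num)
  rw [Real.sqrt_sq (by norm_num)] at h
  linarith

lemma sqrt26_ub : 2 + Real.sqrt 26 < 7.0995 := by
  have h : Real.sqrt 26 < Real.sqrt ((5.0995:ℝ)^2) :=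
    Real.sqrt_lt_sqrt (by norm_num) (by norm_num)
  rw [Real.sqrt_sq (by norm_num)] at h
  linarith

lemma pow_lb : (2:ℝ)^(2.82:ℝ) < 7.099 := by
  have h : ((2:ℝ)^(2.82:ℝ))^(100:ℕ) < (7.099:ℝ)^(100:ℕ) := by
    rw [← Real.rpow_natCast ((2:ℝ)^(2.82:ℝ)) 100, ← Real.rpow_mul (by norm_num),
      show (2.82:ℝ) * (100:ℕ) = ((282:ℕ):ℝ) by norm_num, Real.rpow_natCast]
    norm_num
    rw [show (2:ℝ)^282 = ((2:ℝ)^141)^2 by rw [← pow_mul]]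
    norm_num
  exact lt_of_pow_lt_pow_left₀ 100 (by norm_num) h

lemma pow_ub : (7.0995:ℝ) < (2:ℝ)^(2.83:ℝ) := by
  have h : (7.0995:ℝ)^(100:ℕ) < ((2:ℝ)^(2.83:ℝ))^(100:ℕ) := by
    rw [← Real.rpow_natCast ((2:ℝ)^(2.83:ℝ)) 100, ← Real.rpow_mul (by norm_num),
      show (2.83:ℝ) * (100:ℕ) = ((283:ℕ):ℝ) by norm_num, Real.rpow_natCast]
    norm_num
    rw [show (2:ℝ)^283 = ((2:ℝ)^141)^2 * 2 by rw [← pow_mul, ← pow_succ]]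
    norm_num
  exact lt_of_pow_lt_pow_left₀ 100 (by positivity) h

lemma key (α : ℝ) : 4 / (2:ℝ) ^ α + 22 / (4:ℝ) ^ α = 1 ↔
    (2:ℝ) ^ α = 2 + Real.sqrt 26 := by
  have hx : (0:ℝ) < (2:ℝ) ^ α := Real.rpow_pos_of_pos (by norm_num) α
  have h4 : (4:ℝ) ^ α = ((2:ℝ) ^ α) ^ 2 := by
    rw [show (4:ℝ) = 2 ^ (2:ℕ) by norm_num, ← Real.rpow_natCast 2 2,
      ← Real.rpow_mul (by norm_num), mul_comm, Real.rpow_mul (by norm_num),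
      Real.rpow_natCast]
  have hs : Real.sqrt 26 ^ 2 = 26 := Real.sq_sqrt (by norm_num)
  have hs5 : (5:ℝ) < Real.sqrt 26 := by
    have := sqrt26_lb; linarith
  rw [h4]
  set x := (2:ℝ) ^ α with hxdef
  constructor
  · intro h
    have hq : x ^ 2 - 4 * x - 22 = 0 := by
      field_simp at h
      nlinarith [h]
    have hfac : (x - (2 + Real.sqrt 26)) * (x - (2 - Real.sqrt 26)) = 0 := by
      nlinarith [hq, hs]
    rcases mul_eq_zero.mp hfac with h1 | h2
    · linarith
    · nlinarith
  · intro h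
    rw [h]
    have h1 : (0:ℝ) < 2 + Real.sqrt 26 := by linarith
    have h2 : (2 + Real.sqrt 26) ^ 2 = 30 + 4 * Real.sqrt 26 := by nlinarith
    rw [h2]
    field_simp
    nlinarith

theorem root_g_bounds :
    (∃! α : ℝ, 4 / (2:ℝ) ^ α + 22 / (4:ℝ) ^ α = 1) ∧
    (∀ α : ℝ, 4 / (2:ℝ) ^ α + 22 / (4:ℝ) ^ α = 1 → 2.82 < α ∧ α < 2.83) := by
  have hpos : (0:ℝ) < 2 + Real.sqrt 26 := by
    have := sqrt26_lb; linarith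
  have hbounds : ∀ α : ℝ, 4 / (2:ℝ) ^ α + 22 / (4:ℝ) ^ α = 1 → 2.82 < α ∧ α < 2.83 := by
    intro α h
    have hx : (2:ℝ) ^ α = 2 + Real.sqrt 26 := (key α).mp h
    constructor
    · have : (2:ℝ) ^ (2.82:ℝ) < (2:ℝ) ^ α := by
        rw [hx]; exact lt_trans pow_lb sqrt26_lb
      exact (Real.rpow_lt_rpow_left_iff (by norm_num)).mp this
    · have : (2:ℝ) ^ α < (2:ℝ) ^ (2.83:ℝ) := by
        rw [hx]; exact lt_trans sqrt26_ub pow_ub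
      exact (Real.rpow_lt_rpow_left_iff (by norm_num)).mp this
  refine ⟨⟨Real.logb 2 (2 + Real.sqrt 26), ?_, ?_⟩, hbounds⟩
  · show 4 / (2:ℝ) ^ _ + 22 / (4:ℝ) ^ _ = 1
    rw [key]
    exact Real.rpow_logb (by norm_num) (by norm_num) hpos
  · intro β hβ
    have hx : (2:ℝ) ^ β = 2 + Real.sqrt 26 := (key β).mp hβ
    rw [← hx, Real.logb_rpow (by norm_num) (by norm_num)]
end

section
/- The unique real root α₂ of 4/2^α + 12/4^α + 60/8^α = 1 is strictly smaller than the unique real root α₁ of 4/2^α + 22/4^α = 1. -/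
lemma pow4 (α : ℝ) : (4:ℝ) ^ α = ((2:ℝ) ^ α) ^ 2 := by
  rw [show (4:ℝ) = 2 ^ (2:ℕ) by norm_num, ← Real.rpow_natCast (2:ℝ) 2,
    ← Real.rpow_natCast ((2:ℝ) ^ α) 2, ← Real.rpow_mul (by norm_num),
    ← Real.rpow_mul (by norm_num), mul_comm]

lemma pow8 (α : ℝ) : (8:ℝ) ^ α = ((2:ℝ) ^ α) ^ 3 := by
  rw [show (8:ℝ) = 2 ^ (3:ℕ) by norm_num, ← Real.rpow_natCast (2:ℝ) 3,
    ← Real.rpow_natCast ((2:ℝ) ^ α) 3, ← Real.rpow_mul (by norm_num),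
    ← Real.rpow_mul (by norm_num), mul_comm]

theorem root_h_lt_root_g (α₁ α₂ : ℝ)
    (h₁ : 4 / (2:ℝ) ^ α₁ + 22 / (4:ℝ) ^ α₁ = 1)
    (h₂ : 4 / (2:ℝ) ^ α₂ + 12 / (4:ℝ) ^ α₂ + 60 / (8:ℝ) ^ α₂ = 1) :
    α₂ < α₁ := by
  set x₁ := (2:ℝ) ^ α₁ with hx₁def
  set x₂ := (2:ℝ) ^ α₂ with hx₂def
  have hx₁ : 0 < x₁ := Real.rpow_pos_of_pos (by norm_num) _
  have hx₂ : 0 < x₂ := Real.rpow_pos_of_pos (by norm_num) _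
  rw [pow4] at h₁
  rw [pow4, pow8] at h₂
  have e₁ : x₁ ^ 2 = 4 * x₁ + 22 := by
    field_simp at h₁; simp only [← hx₁def] at h₁; nlinarith [h₁]
  have e₂ : x₂ ^ 3 = 4 * x₂ ^ 2 + 12 * x₂ + 60 := by
    field_simp at h₂; simp only [← hx₂def] at h₂; nlinarith [h₂, pow_pos hx₂ 3]
  have h6 : 6 < x₂ := by nlinarith [sq_nonneg (x₂ - 6), sq_nonneg x₂, sq_nonneg (x₂ + 2)]
  have hlt : x₂ < x₁ := by nlinarith [sq_nonneg (x₁ + x₂), sq_nonneg (x₁ - x₂)]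
  exact (Real.rpow_lt_rpow_left_iff (by norm_num : (1:ℝ) < 2)).mp hlt
end

section
/- Let α > 0 satisfy 4/2^α + 22/4^α = 1, and let D : ℕ → ℝ≥0 satisfy D(k) ≤ 4·D(⌈k/2⌉) + 22·D(⌈k/4⌉) + c for all k ≥ 4, with D(k) bounded by C₀ for k < 4. Then there exists C such that D(k) ≤ C·(k+1)^α for all k. -/
open scoped NNReal

set_option maxHeartbeats 1000000

theorem akra_bazzi_bound_two_terms (α : ℝ) (hα : 0 < α)
    (hroot : 4 / (2:ℝ) ^ α + 22 / (4:ℝ) ^ α = 1)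
    (D : ℕ → ℝ≥0) (c C₀ : ℝ) (hc : 0 < c) (hC₀ : 0 < C₀)
    (hrec : ∀ k ≥ 4, (D k : ℝ) ≤ 4 * (D ((k + 1) / 2) : ℝ) + 22 * (D ((k + 3) / 4) : ℝ) + c)
    (hbase : ∀ k < 4, (D k : ℝ) ≤ C₀) :
    ∃ C : ℝ, ∀ k : ℕ, (D k : ℝ) ≤ C * ((k : ℝ) + 1) ^ α := by
  have h2pos : (0:ℝ) < (2:ℝ) ^ α := Real.rpow_pos_of_pos two_pos α
  have h4pos : (0:ℝ) < (4:ℝ) ^ α := Real.rpow_pos_of_pos (by norm_num) α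
  -- α > 2
  have hα2 : 2 < α := by
    by_contra h
    push_neg at h
    have h1 : (2:ℝ) ^ α ≤ (2:ℝ) ^ (2:ℝ) := Real.rpow_le_rpow_of_exponent_le one_le_two h
    have h2 : (2:ℝ) ^ (2:ℝ) = 4 := by
      rw [show (2:ℝ) = ((2:ℕ):ℝ) from by norm_num, Real.rpow_natCast]; norm_num
    have h3 : (1:ℝ) ≤ 4 / (2:ℝ) ^ α := by
      rw [le_div_iff₀ h2pos]; linarith
    have h4 : (0:ℝ) < 22 / (4:ℝ) ^ α := by positivity
    linarith
  -- α ≤ 3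
  have hα3 : α ≤ 3 := by
    by_contra h
    push_neg at h
    have h1 : (2:ℝ) ^ (3:ℝ) ≤ (2:ℝ) ^ α := Real.rpow_le_rpow_of_exponent_le one_le_two h.le
    have h2 : (2:ℝ) ^ (3:ℝ) = 8 := by
      rw [show (3:ℝ) = ((3:ℕ):ℝ) from by norm_num, Real.rpow_natCast]; norm_num
    have h1' : (4:ℝ) ^ (3:ℝ) ≤ (4:ℝ) ^ α := Real.rpow_le_rpow_of_exponent_le (by norm_num) h.le
    have h2' : (4:ℝ) ^ (3:ℝ) = 64 := by
      rw [show (3:ℝ) = ((3:ℕ):ℝ) from by norm_num, Real.rpow_natCast]; norm_num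
    have h3 : 4 / (2:ℝ) ^ α ≤ 1/2 := by
      rw [div_le_iff₀ h2pos]; nlinarith
    have h4 : 22 / (4:ℝ) ^ α ≤ 22/64 := by
      rw [div_le_iff₀ h4pos]; nlinarith
    linarith
  -- perturbation lemma
  have pert : ∀ x t : ℝ, 1 ≤ x → 0 ≤ t → t ≤ 2 →
      (x + t) ^ α ≤ x ^ α + 13 * t * x ^ (α - 1) := by
    intro x t hx ht0 ht2
    have hx0 : (0:ℝ) < x := lt_of_lt_of_le one_pos hx
    have hxa : (0:ℝ) < x ^ α := Real.rpow_pos_of_pos hx0 α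
    have key : x + t = x * (1 + t / x) := by field_simp
    have h1 : (x + t) ^ α = x ^ α * (1 + t / x) ^ α := by
      rw [key, Real.mul_rpow hx0.le (by positivity)]
    have hs0 : 0 ≤ t / x := by positivity
    have hs2 : t / x ≤ 2 := by
      rw [div_le_iff₀ hx0]; nlinarith
    have h2 : (1 + t / x) ^ α ≤ (1 + t / x) ^ (3:ℝ) :=
      Real.rpow_le_rpow_of_exponent_le (by linarith) hα3
    have h3 : (1 + t / x) ^ (3:ℝ) = (1 + t / x) ^ (3:ℕ) := by
      rw [show (3:ℝ) = ((3:ℕ):ℝ) from by norm_num, Real.rpow_natCast]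
    have h4 : (1 + t / x) ^ (3:ℕ) ≤ 1 + 13 * (t / x) := by
      have e1 : 0 ≤ (2 - t / x) * (t / x) := mul_nonneg (by linarith) hs0
      have e2 : 0 ≤ (2 - t / x) * (t / x) * (t / x) := mul_nonneg e1 hs0
      nlinarith [e1, e2, hs0]
    have h5 : x ^ α * (1 + 13 * (t / x)) = x ^ α + 13 * t * x ^ (α - 1) := by
      rw [Real.rpow_sub hx0, Real.rpow_one]
      field_simp
    calc (x + t) ^ α = x ^ α * (1 + t / x) ^ α := h1
      _ ≤ x ^ α * (1 + 13 * (t / x)) := by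
          apply mul_le_mul_of_nonneg_left _ hxa.le
          calc (1 + t / x) ^ α ≤ (1 + t / x) ^ (3:ℝ) := h2
            _ = (1 + t / x) ^ (3:ℕ) := h3
            _ ≤ 1 + 13 * (t / x) := h4
      _ = x ^ α + 13 * t * x ^ (α - 1) := h5
  set B : ℝ := 625 ^ 3 + 1 with hB
  set g : ℕ → ℝ := fun j => ((j:ℝ) + 1) ^ α - 625 * ((j:ℝ) + 1) ^ (α - 1) + B with hg
  -- g ≥ 1
  have hg1 : ∀ j : ℕ, 1 ≤ g j := by
    intro j
    set u : ℝ := (j:ℝ) + 1 with hu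
    have hu1 : 1 ≤ u := by
      have := Nat.cast_nonneg (α := ℝ) j; simp only [hu]; linarith
    have hu0 : (0:ℝ) < u := by linarith
    have hu1a : 0 ≤ u ^ (α - 1) := Real.rpow_nonneg hu0.le _
    have huα : u ^ α = u * u ^ (α - 1) := by
      rw [show α = 1 + (α - 1) from by ring, Real.rpow_add hu0, Real.rpow_one]
      ring_nf
    rcases le_or_gt u 625 with h | h
    · have h1 : u ^ (α - 1) ≤ (625:ℝ) ^ (α - 1) := Real.rpow_le_rpow hu0.le h (by linarith)
      have h2 : (625:ℝ) ^ (α - 1) ≤ (625:ℝ) ^ (2:ℝ) :=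
        Real.rpow_le_rpow_of_exponent_le (by norm_num) (by linarith)
      have h3 : (625:ℝ) ^ (2:ℝ) = 390625 := by
        rw [show (2:ℝ) = ((2:ℕ):ℝ) from by norm_num, Real.rpow_natCast]; norm_num
      have h4 : 0 ≤ u ^ α := Real.rpow_nonneg hu0.le _
      simp only [hg, hB]
      rw [← hu]
      linarith
    · have h1 : 625 * u ^ (α - 1) ≤ u ^ α := by
        rw [huα]
        nlinarith [mul_nonneg (by linarith : (0:ℝ) ≤ u - 625) hu1a]
      simp only [hg, hB]
      rw [← hu]
      linarith
  -- g j ≤ (1+B) * (j+1)^α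
  have hgle : ∀ j : ℕ, g j ≤ (1 + B) * ((j:ℝ) + 1) ^ α := by
    intro j
    have hu1 : (1:ℝ) ≤ (j:ℝ) + 1 := by
      have := Nat.cast_nonneg (α := ℝ) j; linarith
    have h1 : (1:ℝ) ≤ ((j:ℝ) + 1) ^ α := Real.one_le_rpow hu1 hα.le
    have h2 : 0 ≤ ((j:ℝ) + 1) ^ (α - 1) := Real.rpow_nonneg (by positivity) _
    simp only [hg, hB]
    linarith [h1, h2]
  set K : ℕ := 25 * 244140626 + ⌈c⌉₊ + 4 with hK
  set C : ℝ := max 1 (((Finset.range K).sup D : ℝ≥0) : ℝ) with hC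
  have hC1 : (1:ℝ) ≤ C := le_max_left _ _
  have hCD : ∀ j, j < K → (D j : ℝ) ≤ C := by
    intro j hj
    have : D j ≤ (Finset.range K).sup D := Finset.le_sup (Finset.mem_range.mpr hj)
    calc (D j : ℝ) ≤ (((Finset.range K).sup D : ℝ≥0) : ℝ) := by exact_mod_cast this
      _ ≤ C := le_max_right _ _
  have main : ∀ k : ℕ, (D k : ℝ) ≤ C * g k := by
    intro k
    induction k using Nat.strong_induction_on with
    | _ k ih =>
      by_cases hk : k < K
      · calc (D k : ℝ) ≤ C := hCD k hk
          _ = C * 1 := (mul_one C).symm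
          _ ≤ C * g k := by
              apply mul_le_mul_of_nonneg_left (hg1 k) (by linarith)
      · push_neg at hk
        have hk4 : 4 ≤ k := le_trans (by omega) hk
        have hrecd := hrec k hk4
        have ih1 := ih ((k + 1) / 2) (by omega)
        have ih2 := ih ((k + 3) / 4) (by omega)
        set m : ℕ := (k + 1) / 2 with hm
        set n : ℕ := (k + 3) / 4 with hn
        set u : ℝ := (k:ℝ) + 1 with hu
        set X : ℝ := u / 2 with hX
        set Y : ℝ := u / 4 with hYdef
        set M : ℝ := (m:ℝ) + 1 with hM
        set N : ℝ := (n:ℝ) + 1 with hN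
        have huk : (4:ℝ) ≤ (k:ℝ) := by exact_mod_cast hk4
        have hu0 : (0:ℝ) < u := by simp only [hu]; linarith
        have hX1 : (1:ℝ) ≤ X := by simp only [hX, hu]; linarith
        have hY1 : (1:ℝ) ≤ Y := by simp only [hYdef, hu]; linarith
        have hmX : X ≤ M ∧ M ≤ X + 1 := by
          constructor
          · have : k + 1 ≤ 2 * m + 2 := by omega
            have : ((k:ℝ)) + 1 ≤ 2 * (m:ℝ) + 2 := by exact_mod_cast this
            simp only [hX, hM, hu]; linarith
          · have : 2 * m ≤ k + 1 := by omega
            have : 2 * (m:ℝ) ≤ (k:ℝ) + 1 := by exact_mod_cast this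
            simp only [hX, hM, hu]; linarith
        have hnY : Y ≤ N ∧ N ≤ Y + 2 := by
          constructor
          · have : k + 1 ≤ 4 * n + 4 := by omega
            have : ((k:ℝ)) + 1 ≤ 4 * (n:ℝ) + 4 := by exact_mod_cast this
            simp only [hYdef, hN, hu]; linarith
          · have : 4 * n ≤ k + 3 := by omega
            have : 4 * (n:ℝ) ≤ (k:ℝ) + 3 := by exact_mod_cast this
            simp only [hYdef, hN, hu]; linarith
        have hXp : 0 ≤ X ^ (α - 1) := Real.rpow_nonneg (by linarith) _
        have hYp : 0 ≤ Y ^ (α - 1) := Real.rpow_nonneg (by linarith) _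
        -- upper bounds on M^α, N^α
        have hMα : M ^ α ≤ X ^ α + 13 * X ^ (α - 1) := by
          have h := pert X (M - X) hX1 (by linarith [hmX.1]) (by linarith [hmX.2])
          have e : X + (M - X) = M := by ring
          rw [e] at h
          have e2 : 0 ≤ (1 - (M - X)) * X ^ (α - 1) :=
            mul_nonneg (by linarith [hmX.2]) hXp
          nlinarith [h, e2]
        have hNα : N ^ α ≤ Y ^ α + 26 * Y ^ (α - 1) := by
          have h := pert Y (N - Y) hY1 (by linarith [hnY.1]) (by linarith [hnY.2])
          have e : Y + (N - Y) = N := by ring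
          rw [e] at h
          have e2 : 0 ≤ (2 - (N - Y)) * Y ^ (α - 1) :=
            mul_nonneg (by linarith [hnY.2]) hYp
          nlinarith [h, e2]
        -- lower bounds on M^(α-1), N^(α-1)
        have hM1 : X ^ (α - 1) ≤ M ^ (α - 1) :=
          Real.rpow_le_rpow (by linarith) hmX.1 (by linarith)
        have hN1 : Y ^ (α - 1) ≤ N ^ (α - 1) :=
          Real.rpow_le_rpow (by linarith) hnY.1 (by linarith)
        -- identities
        have hXα : X ^ α = u ^ α / (2:ℝ) ^ α := by
          rw [hX, Real.div_rpow hu0.le (by norm_num)]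
        have hYα : Y ^ α = u ^ α / (4:ℝ) ^ α := by
          rw [hYdef, Real.div_rpow hu0.le (by norm_num)]
        have hsum : 4 * X ^ α + 22 * Y ^ α = u ^ α := by
          rw [hXα, hYα]
          have : 4 * (u ^ α / (2:ℝ) ^ α) + 22 * (u ^ α / (4:ℝ) ^ α)
              = u ^ α * (4 / (2:ℝ) ^ α + 22 / (4:ℝ) ^ α) := by ring
          rw [this, hroot, mul_one]
        -- S ≥ 2 u^(α-1)
        have hX1e : X ^ (α - 1) = 2 * u ^ (α - 1) / (2:ℝ) ^ α := by
          rw [hX, Real.div_rpow hu0.le (by norm_num), Real.rpow_sub hu0,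
            Real.rpow_sub two_pos, Real.rpow_one, Real.rpow_one]
          field_simp
        have hY1e : Y ^ (α - 1) = 4 * u ^ (α - 1) / (4:ℝ) ^ α := by
          rw [hYdef, Real.div_rpow hu0.le (by norm_num), Real.rpow_sub hu0,
            Real.rpow_sub (by norm_num : (0:ℝ) < 4), Real.rpow_one, Real.rpow_one]
          field_simp
        have hu1a : 0 ≤ u ^ (α - 1) := Real.rpow_nonneg hu0.le _
        have hS : 2 * u ^ (α - 1) ≤ 4 * X ^ (α - 1) + 22 * Y ^ (α - 1) := by
          rw [hX1e, hY1e]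
          have e : 4 * (2 * u ^ (α - 1) / (2:ℝ) ^ α) + 22 * (4 * u ^ (α - 1) / (4:ℝ) ^ α)
              = 2 * u ^ (α - 1) * (4 / (2:ℝ) ^ α + 22 / (4:ℝ) ^ α)
                + 44 * (u ^ (α - 1) / (4:ℝ) ^ α) := by ring
          rw [e, hroot, mul_one]
          have : 0 ≤ 44 * (u ^ (α - 1) / (4:ℝ) ^ α) := by positivity
          linarith
        -- u^(α-1) is large
        have hularge : 25 * B + c ≤ u ^ (α - 1) := by
          have hu1' : (1:ℝ) ≤ u := by simp only [hu]; linarith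
          have h2 : u ≤ u ^ (α - 1) := by
            calc u = u ^ (1:ℝ) := (Real.rpow_one u).symm
              _ ≤ u ^ (α - 1) := Real.rpow_le_rpow_of_exponent_le hu1' (by linarith)
          have h3 : (K:ℝ) ≤ (k:ℝ) := by exact_mod_cast hk
          have h4 : c ≤ (⌈c⌉₊ : ℝ) := Nat.le_ceil c
          have h5 : ((25 * 244140626 + ⌈c⌉₊ + 4 : ℕ) : ℝ)
              = 25 * 244140626 + (⌈c⌉₊ : ℝ) + 4 := by push_cast; ring
          have h6 : 25 * B + c ≤ u := by
            simp only [hu, hB]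
            rw [hK] at h3
            rw [h5] at h3
            norm_num
            linarith
          exact h6.trans h2
        -- core inequality: 4 g m + 22 g n + c ≤ g k
        have hcore : 4 * g m + 22 * g n + c ≤ g k := by
          simp only [hg]
          rw [← hu, ← hM, ← hN]
          linarith [hMα, hNα, hM1, hN1, hsum, hS, hularge, hXp, hYp, hu1a]
        calc (D k : ℝ) ≤ 4 * (D m : ℝ) + 22 * (D n : ℝ) + c := hrecd
          _ ≤ 4 * (C * g m) + 22 * (C * g n) + c := by
              linarith [ih1, ih2]
          _ = C * (4 * g m + 22 * g n + c) + (1 - C) * c := by ring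
          _ ≤ C * g k + 0 := by
              have h1 : C * (4 * g m + 22 * g n + c) ≤ C * g k :=
                mul_le_mul_of_nonneg_left hcore (by linarith)
              have h2 : (1 - C) * c ≤ 0 := mul_nonpos_of_nonpos_of_nonneg (by linarith) hc.le
              linarith
          _ = C * g k := add_zero _
  refine ⟨C * (1 + B), fun k => ?_⟩
  calc (D k : ℝ) ≤ C * g k := main k
    _ ≤ C * ((1 + B) * ((k:ℝ) + 1) ^ α) :=
        mul_le_mul_of_nonneg_left (hgle k) (by linarith)
    _ = C * (1 + B) * ((k:ℝ) + 1) ^ α := by ring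
end

section
/- Let α > 1 satisfy 4/2^α + 12/4^α + 60/8^α = 1, and let D : ℕ → ℝ≥0 satisfy D(k) ≤ 4·D(⌈k/2⌉) + 12·D(⌈k/4⌉) + 60·D(⌈k/8⌉) + c for all k ≥ 8, with D(k) ≤ C₀ for k < 8. Then there exists C such that D(k) ≤ C·(k+1)^α for all k. -/
set_option maxHeartbeats 1000000

open scoped NNReal

theorem akra_bazzi_bound_three_terms (α : ℝ) (hα : 1 < α)
    (hroot : 4 / (2:ℝ) ^ α + 12 / (4:ℝ) ^ α + 60 / (8:ℝ) ^ α = 1)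
    (D : ℕ → ℝ≥0) (c C₀ : ℝ) (hc : 0 < c) (hC₀ : 0 < C₀)
    (hrec : ∀ k ≥ 8, (D k : ℝ) ≤
      4 * (D ((k + 1) / 2) : ℝ) + 12 * (D ((k + 3) / 4) : ℝ) + 60 * (D ((k + 7) / 8) : ℝ) + c)
    (hbase : ∀ k < 8, (D k : ℝ) ≤ C₀) :
    ∃ C : ℝ, ∀ k : ℕ, (D k : ℝ) ≤ C * ((k : ℝ) + 1) ^ α := by
  have hα0 : (0:ℝ) < α := by linarith
  have h2pos : (0:ℝ) < (2:ℝ) ^ α := Real.rpow_pos_of_pos (by norm_num) α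
  have h8pos : (0:ℝ) < (8:ℝ) ^ α := Real.rpow_pos_of_pos (by norm_num) α
  have hhalfpos : (0:ℝ) < (1/2:ℝ) ^ α := Real.rpow_pos_of_pos (by norm_num) α
  set ε₁ : ℝ := 60 * ((3/4:ℝ) ^ α - (1/2:ℝ) ^ α) with hε₁def
  have hε₁ : 0 < ε₁ := by
    have h := Real.rpow_lt_rpow (by norm_num : (0:ℝ) ≤ 1/2) (by norm_num : (1/2:ℝ) < 3/4) hα0
    rw [hε₁def]; linarith
  set ε₂ : ℝ := 240 / (8:ℝ) ^ α with hε₂def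
  have hε₂ : 0 < ε₂ := by rw [hε₂def]; positivity
  obtain ⟨C, hCb, hC1, hC2, hC0⟩ :
      ∃ C : ℝ, 2 ^ α * C₀ ≤ C ∧ c ≤ C * ε₁ ∧ c ≤ C * ε₂ ∧ 0 < C := by
    refine ⟨2 ^ α * C₀ + c / ε₁ + c / ε₂, ?_, ?_, ?_, ?_⟩
    · have : 0 < c / ε₁ := by positivity
      have : 0 < c / ε₂ := by positivity
      linarith
    · have e1 : c / ε₁ * ε₁ = c := div_mul_cancel₀ c hε₁.ne'
      have : 0 ≤ (2 ^ α * C₀ + c / ε₂) * ε₁ := by positivity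
      nlinarith
    · have e1 : c / ε₂ * ε₂ = c := div_mul_cancel₀ c hε₂.ne'
      have : 0 ≤ (2 ^ α * C₀ + c / ε₁) * ε₂ := by positivity
      nlinarith
    · positivity
  -- the strengthened claim
  have key : ∀ k : ℕ, (D k : ℝ) ≤ C * (max ((k:ℝ) - 2) (1/2)) ^ α := by
    intro k
    induction k using Nat.strong_induction_on with
    | _ k ih =>
      have hφpos : (0:ℝ) < max ((k:ℝ) - 2) (1/2) :=
        lt_of_lt_of_le (by norm_num) (le_max_right _ _)
      by_cases hk : k < 8
      · -- base case
        have hmα : (1/2:ℝ) ^ α ≤ (max ((k:ℝ) - 2) (1/2)) ^ α :=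
          Real.rpow_le_rpow (by norm_num) (le_max_right _ _) hα0.le
        have hmul : (2:ℝ) ^ α * (1/2:ℝ) ^ α = 1 := by
          rw [← Real.mul_rpow (by norm_num) (by norm_num)]
          norm_num
        calc (D k : ℝ) ≤ C₀ := hbase k hk
          _ = (2 ^ α * C₀) * (1/2:ℝ) ^ α := by nlinarith [hmul]
          _ ≤ C * (1/2:ℝ) ^ α := by
              exact mul_le_mul_of_nonneg_right hCb hhalfpos.le
          _ ≤ C * (max ((k:ℝ) - 2) (1/2)) ^ α :=
              mul_le_mul_of_nonneg_left hmα hC0.le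
      · push_neg at hk
        have hk8 : (8:ℝ) ≤ (k:ℝ) := by exact_mod_cast hk
        set x : ℝ := (k:ℝ) - 2 with hxdef
        clear_value x
        have hx6 : (6:ℝ) ≤ x := by rw [hxdef]; linarith
        have hx0 : (0:ℝ) < x := by linarith
        -- cast bounds for the three quotients
        have c2 : (((k+1)/2 : ℕ) : ℝ) ≤ ((k:ℝ)+1)/2 := by
          have h := Nat.cast_div_le (m := k+1) (n := 2) (α := ℝ)
          push_cast at h; exact h
        have c4 : (((k+3)/4 : ℕ) : ℝ) ≤ ((k:ℝ)+3)/4 := by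
          have h := Nat.cast_div_le (m := k+3) (n := 4) (α := ℝ)
          push_cast at h; exact h
        have c8 : (((k+7)/8 : ℕ) : ℝ) ≤ ((k:ℝ)+7)/8 := by
          have h := Nat.cast_div_le (m := k+7) (n := 8) (α := ℝ)
          push_cast at h; exact h
        have l2 : (k+1)/2 < k := by omega
        have l4 : (k+3)/4 < k := by omega
        have l8 : (k+7)/8 < k := by omega
        have ih2 := ih _ l2
        have ih4 := ih _ l4
        have ih8 := ih _ l8
        set φ2 : ℝ := max ((((k+1)/2 : ℕ):ℝ) - 2) (1/2) with hφ2def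
        set φ4 : ℝ := max ((((k+3)/4 : ℕ):ℝ) - 2) (1/2) with hφ4def
        set φ8 : ℝ := max ((((k+7)/8 : ℕ):ℝ) - 2) (1/2) with hφ8def
        clear_value φ2 φ4 φ8
        have hφ2nn : (0:ℝ) ≤ φ2 := by
          rw [hφ2def]; exact le_trans (by norm_num) (le_max_right _ _)
        have hφ4nn : (0:ℝ) ≤ φ4 := by
          rw [hφ4def]; exact le_trans (by norm_num) (le_max_right _ _)
        have hφ8nn : (0:ℝ) ≤ φ8 := by
          rw [hφ8def]; exact le_trans (by norm_num) (le_max_right _ _)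
        have b2 : φ2 ≤ x / 2 := by
          rw [hφ2def]; exact max_le (by linarith) (by linarith)
        have b4 : φ4 ≤ x / 4 := by
          rw [hφ4def]; exact max_le (by linarith) (by linarith)
        have b8 : ((((k+7)/8 : ℕ):ℝ) - 2) ≤ (x - 7)/8 := by linarith
        have T2 : φ2 ^ α ≤ (x/2) ^ α := Real.rpow_le_rpow hφ2nn b2 hα0.le
        have T4 : φ4 ^ α ≤ (x/4) ^ α := Real.rpow_le_rpow hφ4nn b4 hα0.le
        -- the split identity
        have hsplit : 4*(x/2)^α + 12*(x/4)^α + 60*(x/8)^α = x^α := by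
          rw [Real.div_rpow hx0.le (by norm_num) α, Real.div_rpow hx0.le (by norm_num) α,
            Real.div_rpow hx0.le (by norm_num) α]
          have : 4*(x^α/(2:ℝ)^α) + 12*(x^α/(4:ℝ)^α) + 60*(x^α/(8:ℝ)^α)
              = x^α * (4/(2:ℝ)^α + 12/(4:ℝ)^α + 60/(8:ℝ)^α) := by ring
          rw [this, hroot, mul_one]
        -- the key gain inequality
        have hkey : 60 * (C * φ8 ^ α) + c ≤ 60 * (C * (x/8) ^ α) := by
          rcases le_or_gt x 8 with hx8 | hx8
          · -- small case: φ8 ≤ 1/2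
            have hb : φ8 ≤ 1/2 := by rw [hφ8def]; exact max_le (by linarith) le_rfl
            have r1 : φ8 ^ α ≤ (1/2:ℝ) ^ α := Real.rpow_le_rpow hφ8nn hb hα0.le
            have r2 : (3/4:ℝ) ^ α ≤ (x/8) ^ α :=
              Real.rpow_le_rpow (by norm_num) (by linarith) hα0.le
            have hce : c ≤ C * (60 * ((3/4:ℝ)^α - (1/2:ℝ)^α)) := by rw [← hε₁def]; exact hC1
            have hring : C * (60 * ((3/4:ℝ)^α - (1/2:ℝ)^α))
                = 60 * (C * (3/4:ℝ)^α) - 60 * (C * (1/2:ℝ)^α) := by ring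
            have m1 := mul_le_mul_of_nonneg_left r1 hC0.le
            have m2 := mul_le_mul_of_nonneg_left r2 hC0.le
            linarith
          · -- large case: φ8 ≤ (x-4)/8 and (x-4)^α + 4 ≤ x^α
            have hb : φ8 ≤ (x-4)/8 := by rw [hφ8def]; exact max_le (by linarith) (by linarith)
            have hy4 : (4:ℝ) ≤ x - 4 := by linarith
            set y : ℝ := x - 4 with hydef
            clear_value y
            have hy0 : (0:ℝ) < y := by linarith
            have key2 : y ^ α + 4 ≤ x ^ α := by
              have hu : (1:ℝ) ≤ x / y := by
                rw [le_div_iff₀ hy0]; linarith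
              have h1 : x / y ≤ (x/y) ^ α := by
                calc x/y = (x/y) ^ (1:ℝ) := (Real.rpow_one _).symm
                  _ ≤ (x/y) ^ α := Real.rpow_le_rpow_of_exponent_le hu hα.le
              have h2 : x ^ α = y ^ α * (x/y) ^ α := by
                rw [← Real.mul_rpow hy0.le (by positivity)]
                congr 1
                field_simp
              have h3 : y ≤ y ^ α := by
                calc y = y ^ (1:ℝ) := (Real.rpow_one _).symm
                  _ ≤ y ^ α := Real.rpow_le_rpow_of_exponent_le (by linarith) hα.le
              have hyα : (0:ℝ) < y ^ α := Real.rpow_pos_of_pos hy0 α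
              have h4 : y ^ α * (x/y) ≤ x ^ α := by
                rw [h2]
                exact mul_le_mul_of_nonneg_left h1 hyα.le
              have h5 : y ^ α + 4 ≤ y ^ α * (x/y) := by
                rw [← sub_nonneg]
                have he : y ^ α * (x/y) - (y ^ α + 4) = 4 * (y ^ α - y) / y := by
                  have hx' : x = y + 4 := by rw [hydef]; ring
                  rw [hx']; field_simp; ring
                rw [he]
                have : (0:ℝ) ≤ 4 * (y ^ α - y) := by linarith
                positivity
              linarith
            have r1 : φ8 ^ α ≤ (y/8) ^ α := Real.rpow_le_rpow hφ8nn hb hα0.le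
            have rd : (y/8:ℝ) ^ α = y ^ α / 8 ^ α := Real.div_rpow hy0.le (by norm_num) α
            have rdx : (x/8:ℝ) ^ α = x ^ α / 8 ^ α := Real.div_rpow hx0.le (by norm_num) α
            have q1 : φ8 ^ α ≤ (x ^ α - 4) / 8 ^ α := by
              rw [rd] at r1
              have : y ^ α / 8 ^ α ≤ (x ^ α - 4) / 8 ^ α :=
                (div_le_div_iff_of_pos_right h8pos).mpr (by linarith)
              linarith
            have q2 : C * φ8 ^ α ≤ C * ((x ^ α - 4) / 8 ^ α) :=
              mul_le_mul_of_nonneg_left q1 hC0.le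
            have q3 : 60 * (C * (x ^ α / 8 ^ α)) - 60 * (C * ((x ^ α - 4)/8 ^ α))
                = C * (240 / 8 ^ α) := by
              field_simp
              ring
            rw [rdx]
            have hce : c ≤ C * (240 / (8:ℝ) ^ α) := by rw [← hε₂def]; exact hC2
            linarith
        -- put it together
        have hDrec := hrec k hk
        have P2 : C * φ2 ^ α ≤ C * (x/2) ^ α := mul_le_mul_of_nonneg_left T2 hC0.le
        have P4 : C * φ4 ^ α ≤ C * (x/4) ^ α := mul_le_mul_of_nonneg_left T4 hC0.le
        have hsplitC : C * x ^ α
            = 4*(C*(x/2)^α) + 12*(C*(x/4)^α) + 60*(C*(x/8)^α) := by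
          rw [← hsplit]; ring
        have hmax : max x (1/2) = x := max_eq_left (by linarith)
        rw [hmax]
        calc (D k : ℝ) ≤ 4 * (D ((k+1)/2) : ℝ) + 12 * (D ((k+3)/4) : ℝ)
              + 60 * (D ((k+7)/8) : ℝ) + c := hDrec
          _ ≤ 4 * (C * φ2 ^ α) + 12 * (C * φ4 ^ α) + 60 * (C * φ8 ^ α) + c := by
              linarith [ih2, ih4, ih8]
          _ ≤ C * x ^ α := by linarith [P2, P4, hkey]
  refine ⟨C, fun k => ?_⟩
  calc (D k : ℝ) ≤ C * (max ((k:ℝ) - 2) (1/2)) ^ α := key k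
    _ ≤ C * ((k:ℝ) + 1) ^ α := by
        refine mul_le_mul_of_nonneg_left ?_ hC0.le
        refine Real.rpow_le_rpow (le_trans (by norm_num) (le_max_right _ _)) ?_ hα0.le
        refine max_le (by linarith) ?_
        have : (0:ℝ) ≤ (k:ℝ) := Nat.cast_nonneg k
        linarith
end

section
/- If the real sequence defined by the exact recurrence E(k) = 4·E(k/2) + 12·E(k/4) + 60·E(k/8) + c (interpreted on powers of 8, i.e., k = 8^m, with E(1) = e₀ > 0, c > 0) then E(8^m) = Θ(8^(m·α)) where α is the root of 4/2^α + 12/4^α + 60/8^α = 1; in particular E(8^m)/8^(m·α) is bounded above and below by positive constants. -/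
theorem exact_recurrence_theta (α c e₀ : ℝ) (hc : 0 < c) (he₀ : 0 < e₀)
    (hroot : 4 / (2:ℝ) ^ α + 12 / (4:ℝ) ^ α + 60 / (8:ℝ) ^ α = 1)
    (E : ℝ → ℝ)
    (hpos : ∀ k : ℝ, 1 ≤ k → 0 < E k)
    (hbase : E 1 = e₀)
    (hrec : ∀ k : ℝ, 8 ≤ k → E k = 4 * E (k / 2) + 12 * E (k / 4) + 60 * E (k / 8) + c) :
    ∃ c₁ c₂ : ℝ, 0 < c₁ ∧ 0 < c₂ ∧ ∀ m : ℕ,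
      c₁ * (8:ℝ) ^ ((m : ℝ) * α) ≤ E ((8:ℝ) ^ (m : ℕ)) ∧
      E ((8:ℝ) ^ (m : ℕ)) ≤ c₂ * (8:ℝ) ^ ((m : ℝ) * α) := by
  set l : ℝ := (2:ℝ) ^ α with hl
  have hlpos : 0 < l := Real.rpow_pos_of_pos (by norm_num) α
  have h4 : (4:ℝ) ^ α = l ^ 2 := by
    rw [hl, ← Real.rpow_natCast ((2:ℝ) ^ α) 2, ← Real.rpow_mul (by norm_num : (0:ℝ) ≤ 2),
      show (4:ℝ) = (2:ℝ) ^ (2:ℝ) by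
        rw [show (2:ℝ) = ((2:ℕ):ℝ) by norm_num, Real.rpow_natCast]; norm_num,
      ← Real.rpow_mul (by norm_num : (0:ℝ) ≤ 2)]
    push_cast; ring_nf
  have h8 : (8:ℝ) ^ α = l ^ 3 := by
    rw [hl, ← Real.rpow_natCast ((2:ℝ) ^ α) 3, ← Real.rpow_mul (by norm_num : (0:ℝ) ≤ 2),
      show (8:ℝ) = (2:ℝ) ^ (3:ℝ) by
        rw [show (3:ℝ) = ((3:ℕ):ℝ) by norm_num, Real.rpow_natCast]; norm_num,
      ← Real.rpow_mul (by norm_num : (0:ℝ) ≤ 2)]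
    push_cast; ring_nf
  rw [h4, h8] at hroot
  have hcubic : l ^ 3 = 4 * l ^ 2 + 12 * l + 60 := by
    field_simp at hroot
    have h2 : l ^ 3 * l ^ 3 = l ^ 3 * (4 * l ^ 2 + 12 * l + 60) := by linear_combination (-l ^ 3) * hroot
    exact mul_left_cancel₀ (by positivity) h2
  have hl1 : 1 ≤ l := by nlinarith [hcubic, hlpos, sq_nonneg l, sq_nonneg (l - 1)]
  set F : ℕ → ℝ := fun n => E ((2:ℝ) ^ n) with hF
  have hFpos : ∀ n, 0 < F n := fun n => hpos _ (one_le_pow₀ (by norm_num))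
  have hFrec : ∀ n : ℕ, F (n + 3) = 4 * F (n + 2) + 12 * F (n + 1) + 60 * F n + c := by
    intro n
    have h8le : (8:ℝ) ≤ 2 ^ (n + 3) := by
      calc (8:ℝ) = 2 ^ 3 := by norm_num
      _ ≤ 2 ^ (n + 3) := pow_le_pow_right₀ (by norm_num) (by omega)
    have h := hrec ((2:ℝ) ^ (n + 3)) h8le
    rw [show ((2:ℝ) ^ (n + 3)) / 2 = 2 ^ (n + 2) by rw [pow_succ]; ring,
      show ((2:ℝ) ^ (n + 3)) / 4 = 2 ^ (n + 1) by rw [pow_succ, pow_succ]; ring,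
      show ((2:ℝ) ^ (n + 3)) / 8 = 2 ^ n by rw [pow_succ, pow_succ, pow_succ]; ring] at h
    exact h
  set K : ℝ := c / 75 with hK
  have hKpos : 0 < K := by positivity
  set B : ℝ := F 0 + F 1 + F 2 + K with hB
  have hBpos : 0 < B := by
    have := hFpos 0; have := hFpos 1; have := hFpos 2; linarith
  set A : ℝ := min (F 0) (min (F 1) (F 2)) / l ^ 2 with hA
  have hApos : 0 < A := by
    apply div_pos _ (by positivity)
    exact lt_min (hFpos 0) (lt_min (hFpos 1) (hFpos 2))
  have hbaseA : ∀ i : ℕ, i ≤ 2 → A * l ^ i ≤ F i := by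
    intro i hi
    have h1 : l ^ i ≤ l ^ 2 := pow_le_pow_right₀ hl1 hi
    have h2 : A * l ^ 2 = min (F 0) (min (F 1) (F 2)) := by
      rw [hA, div_mul_cancel₀]; positivity
    have h3 : min (F 0) (min (F 1) (F 2)) ≤ F i := by
      interval_cases i
      · exact min_le_left _ _
      · exact le_trans (min_le_right _ _) (min_le_left _ _)
      · exact le_trans (min_le_right _ _) (min_le_right _ _)
    nlinarith [hApos]
  have hbaseB : ∀ i : ℕ, i ≤ 2 → F i ≤ B * l ^ i - K := by
    intro i hi
    have h1 : (1:ℝ) ≤ l ^ i := one_le_pow₀ hl1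
    have h2 : F i ≤ B - K := by
      have := hFpos 0; have := hFpos 1; have := hFpos 2
      interval_cases i <;> (rw [hB]; linarith)
    nlinarith [hBpos]
  have key : ∀ n : ℕ, (A * l ^ n ≤ F n ∧ F n ≤ B * l ^ n - K) ∧
      (A * l ^ (n + 1) ≤ F (n + 1) ∧ F (n + 1) ≤ B * l ^ (n + 1) - K) ∧
      (A * l ^ (n + 2) ≤ F (n + 2) ∧ F (n + 2) ≤ B * l ^ (n + 2) - K) := by
    intro n
    induction n with
    | zero =>
      exact ⟨⟨hbaseA 0 (by norm_num), hbaseB 0 (by norm_num)⟩,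
        ⟨hbaseA 1 (by norm_num), hbaseB 1 (by norm_num)⟩,
        ⟨hbaseA 2 (by norm_num), hbaseB 2 (by norm_num)⟩⟩
    | succ n ih =>
      obtain ⟨⟨l0, u0⟩, ⟨l1, u1⟩, ⟨l2, u2⟩⟩ := ih
      refine ⟨⟨l1, u1⟩, ⟨l2, u2⟩, ?_, ?_⟩
      · have e1 : A * l ^ (n + 3) =
            4 * (A * l ^ (n + 2)) + 12 * (A * l ^ (n + 1)) + 60 * (A * l ^ n) := by
          linear_combination A * l ^ n * hcubic
        rw [show n + 1 + 2 = n + 3 by ring, hFrec n]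
        linarith
      · have e2 : B * l ^ (n + 3) =
            4 * (B * l ^ (n + 2)) + 12 * (B * l ^ (n + 1)) + 60 * (B * l ^ n) := by
          linear_combination B * l ^ n * hcubic
        rw [show n + 1 + 2 = n + 3 by ring, hFrec n]
        nlinarith [u0, u1, u2, e2, hc]
  have hconv : ∀ m : ℕ, (8:ℝ) ^ ((m : ℝ) * α) = l ^ (3 * m) := by
    intro m
    rw [← Real.rpow_natCast l (3 * m), hl, ← Real.rpow_mul (by norm_num : (0:ℝ) ≤ 2),
      show (8:ℝ) = (2:ℝ) ^ (3:ℝ) by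
        rw [show (3:ℝ) = ((3:ℕ):ℝ) by norm_num, Real.rpow_natCast]; norm_num,
      ← Real.rpow_mul (by norm_num : (0:ℝ) ≤ 2)]
    congr 1
    push_cast; ring
  have h8m : ∀ m : ℕ, (8:ℝ) ^ (m : ℕ) = (2:ℝ) ^ (3 * m) := by
    intro m; rw [pow_mul]; norm_num
  refine ⟨A, B, hApos, hBpos, fun m => ?_⟩
  have ⟨hlo, hhi⟩ := (key (3 * m)).1
  rw [hconv m, h8m m]
  exact ⟨hlo, le_trans hhi (by linarith [hKpos])⟩
end

section
/- Let α₀ = 3, α₁ the root of 4/2^α + 22/4^α = 1, and α₂ the root of 4/2^α + 12/4^α + 60/8^α = 1. Then α₂ < α₁ < α₀. -/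
theorem exponents_strictly_decrease (α₀ α₁ α₂ : ℝ)
    (h₀ : α₀ = 3)
    (h₁ : 4 / (2:ℝ) ^ α₁ + 22 / (4:ℝ) ^ α₁ = 1)
    (h₂ : 4 / (2:ℝ) ^ α₂ + 12 / (4:ℝ) ^ α₂ + 60 / (8:ℝ) ^ α₂ = 1) :
    α₂ < α₁ ∧ α₁ < α₀ := by
  have two_le : (0:ℝ) ≤ 2 := by norm_num
  have e4 : ∀ a : ℝ, (4:ℝ)^a = ((2:ℝ)^a)^2 := by
    intro a
    rw [← Real.rpow_natCast ((2:ℝ)^a) 2, ← Real.rpow_mul two_le,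
        show (4:ℝ) = (2:ℝ)^((2:ℕ):ℝ) from by rw [Real.rpow_natCast]; norm_num,
        ← Real.rpow_mul two_le]
    ring_nf
  have e8 : ∀ a : ℝ, (8:ℝ)^a = ((2:ℝ)^a)^3 := by
    intro a
    rw [← Real.rpow_natCast ((2:ℝ)^a) 3, ← Real.rpow_mul two_le,
        show (8:ℝ) = (2:ℝ)^((3:ℕ):ℝ) from by rw [Real.rpow_natCast]; norm_num,
        ← Real.rpow_mul two_le]
    ring_nf
  set t := (2:ℝ)^α₁ with ht
  set s := (2:ℝ)^α₂ with hs
  have htpos : 0 < t := Real.rpow_pos_of_pos (by norm_num) _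
  have hspos : 0 < s := Real.rpow_pos_of_pos (by norm_num) _
  rw [e4 α₁, ← ht] at h₁
  rw [e4 α₂, e8 α₂, ← hs] at h₂
  have htne : t ≠ 0 := htpos.ne'
  have hsne : s ≠ 0 := hspos.ne'
  have ht2 : t^2 = 4*t + 22 := by
    field_simp at h₁
    nlinarith [h₁, sq_nonneg t, htpos]
  have hs3 : s^3 = 4*s^2 + 12*s + 60 := by
    field_simp at h₂
    have h' : (4*s^2 + 12*s + 60) * s^3 = s^3 * s^3 := by linear_combination s^3 * h₂
    have := mul_right_cancel₀ (pow_ne_zero 3 hsne) h'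
    linarith
  have ht7 : 7 < t := by nlinarith [ht2, htpos]
  have ht8 : t < 8 := by nlinarith [ht2, htpos]
  have hs7 : s < 7 := by nlinarith [hs3, hspos, sq_nonneg s, sq_nonneg (s-7), mul_pos hspos hspos]
  constructor
  · have : s < t := lt_trans hs7 ht7
    exact (Real.rpow_lt_rpow_left_iff (by norm_num : (1:ℝ) < 2)).mp this
  · rw [h₀]
    have h8 : (8:ℝ) = (2:ℝ)^(3:ℝ) := by
      rw [show ((3:ℝ)) = ((3:ℕ):ℝ) by norm_num, Real.rpow_natCast]; norm_num
    have : t < (2:ℝ)^(3:ℝ) := by rw [← h8]; exact ht8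
    exact (Real.rpow_lt_rpow_left_iff (by norm_num : (1:ℝ) < 2)).mp this
end
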